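/- arXiv:1901.08566 — 3 statements merged into one kernel-verified Lean document; each statement's English description precedes it below -/
import Mathlib

section
/- Let d_A, d_B ≥ 1 and let n ≥ 1. Then every n-outcome POVM M on ℂ^{d_A} ⊗ ℂ^{d_B} ≅ ℂ^{d_A d_B} satisfies R_Sep(M) ≤ min{d_A, d_B}, where Sep is the set of n-outcome separable POVMs. -/
open scoped BigOperators ComplexOrder Kronecker

/-- A POVM with outcome set `κ` on the Hilbert space with orthonormal basis indexed by `ι`:
a tuple of positive semidefinite matrices summing to `1`. -/
def IsPOVM {ι κ : Type*} [Fintype ι] [DecidableEq ι] [Fintype κ]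
    (M : κ → Matrix ι ι ℂ) : Prop :=
  (∀ k, (M k).PosSemidef) ∧ ∑ k, M k = 1

/-- A separable operator on `ℂ^{d_A} ⊗ ℂ^{d_B}`: a finite sum of Kronecker products of
positive semidefinite operators. -/
def IsSepMat {dA dB : ℕ} (X : Matrix (Fin dA × Fin dB) (Fin dA × Fin dB) ℂ) : Prop :=
  ∃ (k : ℕ) (A : Fin k → Matrix (Fin dA) (Fin dA) ℂ) (B : Fin k → Matrix (Fin dB) (Fin dB) ℂ),
    (∀ i, (A i).PosSemidef) ∧ (∀ i, (B i).PosSemidef) ∧ X = ∑ i, A i ⊗ₖ B i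

/-- The set of admissible noise parameters `s ≥ 0` for which some POVM `N` makes
`(M + s N)/(1+s)` a member of `F`. -/
def robustnessSet {ι κ : Type*} [Fintype ι] [DecidableEq ι] [Fintype κ]
    (F : Set (κ → Matrix ι ι ℂ)) (M : κ → Matrix ι ι ℂ) : Set ℝ :=
  {s : ℝ | 0 ≤ s ∧ ∃ N, IsPOVM N ∧
    (fun k => (1 + s)⁻¹ • (M k + s • N k)) ∈ F}

/-- The robustness of `M` with respect to `F`. -/
noncomputable def robustness {ι κ : Type*} [Fintype ι] [DecidableEq ι] [Fintype κ]
    (F : Set (κ → Matrix ι ι ℂ)) (M : κ → Matrix ι ι ℂ) : ℝ :=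
  sInf (robustnessSet F M)

/-- The set of separable POVMs with `n` outcomes on `ℂ^{d_A} ⊗ ℂ^{d_B}`. -/
def SepPOVM (dA dB n : ℕ) : Set (Fin n → Matrix (Fin dA × Fin dB) (Fin dA × Fin dB) ℂ) :=
  {N | IsPOVM N ∧ ∀ i, IsSepMat (N i)}

namespace SepRobustAux

open Matrix

set_option linter.unusedSectionVars false

section Pinch

variable {ι κ : Type*} [Fintype ι] [DecidableEq ι] [Fintype κ] [DecidableEq κ]

/-- Pinching of a matrix along the blocks given by `f`. -/
def pinch (f : ι → κ) (M : Matrix ι ι ℂ) : Matrix ι ι ℂ :=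
  Matrix.of fun i j => if f i = f j then M i j else 0

lemma pinch_apply (f : ι → κ) (M : Matrix ι ι ℂ) (i j : ι) :
    pinch f M i j = if f i = f j then M i j else 0 := rfl

lemma pinch_one (f : ι → κ) : pinch f (1 : Matrix ι ι ℂ) = 1 := by
  ext i j
  by_cases h : i = j
  · subst h; simp [pinch_apply]
  · simp [pinch_apply, Matrix.one_apply_ne h]

lemma sum_pinch {n : Type*} [Fintype n] (f : ι → κ) (M : n → Matrix ι ι ℂ) :
    ∑ k, pinch f (M k) = pinch f (∑ k, M k) := by
  ext i j
  by_cases h : f i = f j <;> simp [pinch_apply, h, Matrix.sum_apply]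

lemma quad_pair_le {X : Matrix ι ι ℂ} (hX : ∀ v, 0 ≤ star v ⬝ᵥ (X *ᵥ v)) (u w : ι → ℂ) :
    star u ⬝ᵥ (X *ᵥ w) + star w ⬝ᵥ (X *ᵥ u)
      ≤ star u ⬝ᵥ (X *ᵥ u) + star w ⬝ᵥ (X *ᵥ w) := by
  have h := hX (u - w)
  have e : star (u - w) ⬝ᵥ (X *ᵥ (u - w))
      = star u ⬝ᵥ (X *ᵥ u) + star w ⬝ᵥ (X *ᵥ w)
        - (star u ⬝ᵥ (X *ᵥ w) + star w ⬝ᵥ (X *ᵥ u)) := by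
    rw [star_sub, Matrix.mulVec_sub, sub_dotProduct, dotProduct_sub,
      dotProduct_sub]
    ring
  rw [e] at h
  exact sub_nonneg.mp h

lemma nonneg_of_two_mul_nonneg {z : ℂ} (h : 0 ≤ 2 * z) : 0 ≤ z := by
  rw [Complex.le_def] at h ⊢
  simp only [Complex.mul_re, Complex.mul_im, Complex.zero_re, Complex.zero_im] at h ⊢
  norm_num at h
  constructor <;> linarith [h.1, h.2]

lemma quad_sum_le {X : Matrix ι ι ℂ} (hX : ∀ v, 0 ≤ star v ⬝ᵥ (X *ᵥ v)) (x : κ → ι → ℂ) :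
    star (∑ c, x c) ⬝ᵥ (X *ᵥ ∑ c, x c)
      ≤ (Fintype.card κ : ℂ) * ∑ c, star (x c) ⬝ᵥ (X *ᵥ x c) := by
  have hmv : X *ᵥ (∑ c, x c) = ∑ c, X *ᵥ x c := by
    funext i
    simp only [mulVec, dotProduct, Finset.sum_apply, Finset.mul_sum]
    exact Finset.sum_comm
  have hdl : ∀ (u : ι → ℂ), star (∑ c, x c) ⬝ᵥ u = ∑ b, star (x b) ⬝ᵥ u := by
    intro u
    rw [star_sum]
    simp only [dotProduct, Finset.sum_apply, Finset.sum_mul]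
    exact Finset.sum_comm
  have hdr : ∀ (b : κ), star (x b) ⬝ᵥ (∑ c, X *ᵥ x c) = ∑ c, star (x b) ⬝ᵥ (X *ᵥ x c) := by
    intro b
    simp only [dotProduct, Finset.sum_apply, Finset.mul_sum]
    exact Finset.sum_comm
  have expand : star (∑ c, x c) ⬝ᵥ (X *ᵥ ∑ c, x c)
      = ∑ b, ∑ c, star (x b) ⬝ᵥ (X *ᵥ x c) := by
    rw [hmv, hdl]
    exact Finset.sum_congr rfl fun b _ => hdr b
  have key : (2:ℂ) * (∑ b, ∑ c, star (x b) ⬝ᵥ (X *ᵥ x c))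
      ≤ (2:ℂ) * ((Fintype.card κ : ℂ) * ∑ c, star (x c) ⬝ᵥ (X *ᵥ x c)) := by
    have hswap : (∑ b, ∑ c, star (x b) ⬝ᵥ (X *ᵥ x c))
        = ∑ b, ∑ c, star (x c) ⬝ᵥ (X *ᵥ x b) := Finset.sum_comm
    calc (2:ℂ) * (∑ b, ∑ c, star (x b) ⬝ᵥ (X *ᵥ x c))
        = ∑ b, ∑ c, (star (x b) ⬝ᵥ (X *ᵥ x c) + star (x c) ⬝ᵥ (X *ᵥ x b)) := by
          rw [two_mul]; nth_rewrite 2 [hswap]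
          rw [← Finset.sum_add_distrib]
          exact Finset.sum_congr rfl fun b _ => (Finset.sum_add_distrib).symm
      _ ≤ ∑ b, ∑ c, (star (x b) ⬝ᵥ (X *ᵥ x b) + star (x c) ⬝ᵥ (X *ᵥ x c)) := by
          refine Finset.sum_le_sum fun b _ => Finset.sum_le_sum fun c _ => ?_
          exact quad_pair_le hX _ _
      _ = (2:ℂ) * ((Fintype.card κ : ℂ) * ∑ c, star (x c) ⬝ᵥ (X *ᵥ x c)) := by
          simp only [Finset.sum_add_distrib, Finset.sum_const, Finset.card_univ,
            nsmul_eq_mul]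
          rw [← Finset.mul_sum]
          ring
  rw [expand, ← sub_nonneg]
  refine nonneg_of_two_mul_nonneg ?_
  rw [mul_sub]
  exact sub_nonneg.mpr key

/-- restriction of `v` to the block `c` -/
def blk (f : ι → κ) (v : ι → ℂ) (c : κ) : ι → ℂ := fun i => if f i = c then v i else 0

lemma sum_blk (f : ι → κ) (v : ι → ℂ) : ∑ c, blk f v c = v := by
  funext i
  simp [blk, Finset.sum_apply]

lemma pinch_quad (f : ι → κ) (M : Matrix ι ι ℂ) (v : ι → ℂ) :
    star v ⬝ᵥ (pinch f M *ᵥ v) = ∑ c, star (blk f v c) ⬝ᵥ (M *ᵥ blk f v c) := by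
  simp only [dotProduct, mulVec, pinch_apply, Pi.star_apply, blk]
  rw [Finset.sum_comm]
  refine Finset.sum_congr rfl fun i _ => ?_
  have key : ∀ c, star (if f i = c then v i else 0) * ∑ j, M i j * (if f j = c then v j else 0)
      = ∑ j, (if f i = c ∧ f j = c then star (v i) * (M i j * v j) else 0) := by
    intro c
    rw [Finset.mul_sum]
    refine Finset.sum_congr rfl fun j _ => ?_
    by_cases h1 : f i = c <;> by_cases h2 : f j = c <;> simp [h1, h2]
  rw [Finset.sum_congr rfl fun c _ => key c, Finset.sum_comm, Finset.mul_sum]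
  refine Finset.sum_congr rfl fun j _ => ?_
  by_cases h : f i = f j
  · rw [Finset.sum_eq_single (f i)]
    · simp [h]
    · intro c _ hc; simp [Ne.symm, fun hh : f i = c => hc hh.symm]; tauto
    · simp
  · rw [Finset.sum_eq_zero]
    · simp [h]
    · intro c _
      by_cases h1 : f i = c
      · by_cases h2 : f j = c
        · exact absurd (h1.trans h2.symm) h
        · simp [h2]
      · simp [h1]

lemma isHermitian_pinch {f : ι → κ} {M : Matrix ι ι ℂ} (hM : M.IsHermitian) :
    (pinch f M).IsHermitian := by
  ext i j
  simp only [conjTranspose_apply, pinch_apply]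
  by_cases h : f i = f j
  · rw [if_pos h.symm, if_pos h, hM.apply i j]
  · rw [if_neg (fun hh => h hh.symm), if_neg h, star_zero]

lemma pinch_posSemidef {f : ι → κ} {M : Matrix ι ι ℂ} (hM : M.PosSemidef) :
    (pinch f M).PosSemidef := by
  refine .of_dotProduct_mulVec_nonneg (isHermitian_pinch hM.1) fun v => ?_
  rw [pinch_quad]
  exact Finset.sum_nonneg fun c _ => hM.dotProduct_mulVec_nonneg _

lemma complex_nonneg_star {c : ℂ} (hc : 0 ≤ c) : star c = c := by
  rw [Complex.le_def] at hc
  apply Complex.ext <;> simp [← hc.2]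

lemma smul_posSemidef {c : ℂ} (hc : 0 ≤ c)
    {A : Matrix ι ι ℂ} (hA : A.PosSemidef) : (c • A).PosSemidef := by
  refine .of_dotProduct_mulVec_nonneg ?_ ?_
  · show (c • A)ᴴ = c • A
    rw [conjTranspose_smul, complex_nonneg_star hc, hA.1.eq]
  · intro v
    rw [Matrix.smul_mulVec, dotProduct_smul, smul_eq_mul]
    exact mul_nonneg hc (hA.dotProduct_mulVec_nonneg v)

/-- The pinching inequality: `M ≤ |κ| ⋅ pinch f M`. -/
lemma pinch_card_smul_sub_posSemidef {f : ι → κ} {M : Matrix ι ι ℂ} (hM : M.PosSemidef) :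
    ((Fintype.card κ : ℂ) • pinch f M - M).PosSemidef := by
  refine .of_dotProduct_mulVec_nonneg ?_ ?_
  · show _ = _
    rw [conjTranspose_sub, conjTranspose_smul, hM.1.eq, (isHermitian_pinch hM.1).eq]
    congr 1
    simp
  · intro v
    have h1 : star v ⬝ᵥ (((Fintype.card κ : ℂ) • pinch f M - M) *ᵥ v)
        = (Fintype.card κ : ℂ) * (star v ⬝ᵥ (pinch f M *ᵥ v)) - star v ⬝ᵥ (M *ᵥ v) := by
      rw [Matrix.sub_mulVec, dotProduct_sub, Matrix.smul_mulVec,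
        dotProduct_smul, smul_eq_mul]
    rw [h1, sub_nonneg, pinch_quad]
    have h2 := quad_sum_le hM.dotProduct_mulVec_nonneg (blk f v)
    rwa [sum_blk] at h2

end Pinch

section Sep

variable {dA dB : ℕ}

lemma isSepMat_zero : IsSepMat (0 : Matrix (Fin dA × Fin dB) (Fin dA × Fin dB) ℂ) :=
  ⟨0, Fin.elim0, Fin.elim0, fun i => i.elim0, fun i => i.elim0, by simp⟩

lemma isSepMat_one : IsSepMat (1 : Matrix (Fin dA × Fin dB) (Fin dA × Fin dB) ℂ) :=
  ⟨1, fun _ => 1, fun _ => 1, fun _ => Matrix.PosSemidef.one, fun _ => Matrix.PosSemidef.one,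
    by simp [Matrix.one_kronecker_one]⟩

lemma isSepMat_add {X Y : Matrix (Fin dA × Fin dB) (Fin dA × Fin dB) ℂ}
    (hX : IsSepMat X) (hY : IsSepMat Y) : IsSepMat (X + Y) := by
  obtain ⟨k, A, B, hA, hB, hXe⟩ := hX
  obtain ⟨l, A', B', hA', hB', hYe⟩ := hY
  refine ⟨k + l, Fin.append A A', Fin.append B B', ?_, ?_, ?_⟩
  · intro i
    exact Fin.addCases (fun i => by rw [Fin.append_left]; exact hA i)
      (fun i => by rw [Fin.append_right]; exact hA' i) i
  · intro i
    exact Fin.addCases (fun i => by rw [Fin.append_left]; exact hB i)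
      (fun i => by rw [Fin.append_right]; exact hB' i) i
  · rw [hXe, hYe, Fin.sum_univ_add]
    congr 1
    · exact Finset.sum_congr rfl fun i _ => by rw [Fin.append_left, Fin.append_left]
    · exact Finset.sum_congr rfl fun i _ => by rw [Fin.append_right, Fin.append_right]

lemma isSepMat_smul {c : ℂ} (hc : 0 ≤ c) {X : Matrix (Fin dA × Fin dB) (Fin dA × Fin dB) ℂ}
    (hX : IsSepMat X) : IsSepMat (c • X) := by
  obtain ⟨k, A, B, hA, hB, hXe⟩ := hX
  refine ⟨k, fun i => c • A i, B, fun i => smul_posSemidef hc (hA i), hB, ?_⟩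
  rw [hXe, Finset.smul_sum]
  exact Finset.sum_congr rfl fun i _ => (Matrix.smul_kronecker c (A i) (B i)).symm

lemma isSepMat_pinch_snd {M : Matrix (Fin dA × Fin dB) (Fin dA × Fin dB) ℂ}
    (hM : M.PosSemidef) : IsSepMat (pinch Prod.snd M) := by
  refine ⟨dB, fun b => M.submatrix (fun p => (p, b)) (fun p => (p, b)),
    fun b => Matrix.diagonal (fun c => if c = b then (1:ℂ) else 0), ?_, ?_, ?_⟩
  · exact fun b => hM.submatrix _
  · intro b
    refine Matrix.PosSemidef.diagonal fun c => ?_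
    by_cases h : c = b <;> simp [h]
  · ext ⟨p, c⟩ ⟨q, c'⟩
    simp only [Matrix.sum_apply, Matrix.kroneckerMap_apply, Matrix.submatrix_apply,
      Matrix.diagonal_apply, pinch_apply]
    by_cases h : c = c'
    · subst h
      rw [Finset.sum_eq_single c]
      · simp
      · intro b _ hb; simp [Ne.symm hb]
      · simp
    · rw [Finset.sum_eq_zero (fun b _ => by simp [h])]
      simp [h]

lemma isSepMat_pinch_fst {M : Matrix (Fin dA × Fin dB) (Fin dA × Fin dB) ℂ}
    (hM : M.PosSemidef) : IsSepMat (pinch Prod.fst M) := by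
  refine ⟨dA, fun a => Matrix.diagonal (fun p => if p = a then (1:ℂ) else 0),
    fun a => M.submatrix (fun b => (a, b)) (fun b => (a, b)), ?_, ?_, ?_⟩
  · intro a
    refine Matrix.PosSemidef.diagonal fun p => ?_
    by_cases h : p = a <;> simp [h]
  · exact fun a => hM.submatrix _
  · ext ⟨p, c⟩ ⟨q, c'⟩
    simp only [Matrix.sum_apply, Matrix.kroneckerMap_apply, Matrix.submatrix_apply,
      Matrix.diagonal_apply, pinch_apply]
    by_cases h : p = q
    · subst h
      rw [Finset.sum_eq_single p]
      · simp
      · intro a _ ha; simp [Ne.symm ha]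
      · simp
    · rw [Finset.sum_eq_zero (fun a _ => by simp [h])]
      simp [h]

end Sep

lemma real_smul_mat {ι ι' : Type*} (r : ℝ) (A : Matrix ι ι' ℂ) :
    r • A = (r : ℂ) • A := by
  ext i j
  simp [Complex.real_smul]

/-- The main construction: mixing with noise with `s = |κ|` (the number of blocks) makes
any POVM separable, provided pinching along `f` always produces separable matrices. -/
lemma card_mem_robustnessSet {dA dB n : ℕ} {κ : Type*} [Fintype κ] [DecidableEq κ]
    (f : Fin dA × Fin dB → κ) (hd : 1 ≤ Fintype.card κ)
    (hsep : ∀ X : Matrix (Fin dA × Fin dB) (Fin dA × Fin dB) ℂ,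
      X.PosSemidef → IsSepMat (pinch f X))
    (hn : 1 ≤ n) (M : Fin n → Matrix (Fin dA × Fin dB) (Fin dA × Fin dB) ℂ)
    (hM : IsPOVM M) :
    ((Fintype.card κ : ℝ)) ∈ robustnessSet (SepPOVM dA dB n) M := by
  set d : ℕ := Fintype.card κ with hd_def
  have hdR : (0:ℝ) < (d:ℝ) := by exact_mod_cast hd
  have hdC : (d : ℂ) ≠ 0 := Nat.cast_ne_zero.mpr (by omega)
  have hdC0 : (0:ℂ) ≤ (d : ℂ) := by exact_mod_cast Nat.cast_nonneg d
  have hdCinv : (0:ℂ) ≤ (d : ℂ)⁻¹ := by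
    rw [show ((d:ℂ))⁻¹ = (((d:ℝ)⁻¹ : ℝ) : ℂ) by push_cast; ring]
    rw [Complex.zero_le_real]
    positivity
  set i0 : Fin n := ⟨0, hn⟩ with hi0
  set δ : Fin n → Matrix (Fin dA × Fin dB) (Fin dA × Fin dB) ℂ :=
    fun k => if k = i0 then 1 else 0 with hδ
  have hδpsd : ∀ k, (δ k).PosSemidef := by
    intro k
    by_cases h : k = i0 <;> simp [hδ, h, Matrix.PosSemidef.one, Matrix.PosSemidef.zero]
  have hδsum : ∑ k, δ k = 1 := by
    rw [hδ, Finset.sum_ite_eq' Finset.univ i0 (fun _ => 1)]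
    simp
  set N : Fin n → Matrix (Fin dA × Fin dB) (Fin dA × Fin dB) ℂ :=
    fun k => (d : ℂ)⁻¹ • (((d : ℂ) • pinch f (M k) - M k) + δ k) with hN
  have hNpsd : ∀ k, (N k).PosSemidef := fun k =>
    smul_posSemidef hdCinv ((pinch_card_smul_sub_posSemidef (hM.1 k)).add (hδpsd k))
  have hNsum : ∑ k, N k = 1 := by
    rw [hN, ← Finset.smul_sum]
    have : (∑ k, (((d : ℂ) • pinch f (M k) - M k) + δ k))
        = (d : ℂ) • (1 : Matrix (Fin dA × Fin dB) (Fin dA × Fin dB) ℂ) := by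
      rw [Finset.sum_add_distrib, Finset.sum_sub_distrib, ← Finset.smul_sum, sum_pinch,
        hM.2, pinch_one, hδsum]
      abel
    rw [this, smul_smul, inv_mul_cancel₀ hdC, one_smul]
  refine ⟨by positivity, N, ⟨hNpsd, hNsum⟩, ?_⟩
  have hE : (fun k => (1 + (d:ℝ))⁻¹ • (M k + (d:ℝ) • N k))
      = fun k => ((1 : ℂ) + (d:ℂ))⁻¹ • ((d : ℂ) • pinch f (M k) + δ k) := by
    funext k
    have h1 : ((d:ℝ)) • N k = ((d:ℂ)) • N k := by
      rw [real_smul_mat]; norm_num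
    have h2 : ((d:ℂ)) • N k = ((d : ℂ) • pinch f (M k) - M k) + δ k := by
      rw [hN, smul_smul, mul_inv_cancel₀ hdC, one_smul]
    have h3 : M k + ((d:ℝ)) • N k = (d : ℂ) • pinch f (M k) + δ k := by
      rw [h1, h2]; abel
    rw [h3, real_smul_mat]
    congr 1
    push_cast
    ring
  rw [hE]
  have h1dC : ((1:ℂ) + (d:ℂ)) ≠ 0 := by
    rw [show ((1:ℂ) + (d:ℂ)) = (((1 + (d:ℝ)) : ℝ) : ℂ) by push_cast; ring]
    rw [Complex.ofReal_ne_zero]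
    positivity
  have h1dCinv : (0:ℂ) ≤ ((1:ℂ) + (d:ℂ))⁻¹ := by
    rw [show ((1:ℂ) + (d:ℂ))⁻¹ = (((1 + (d:ℝ))⁻¹ : ℝ) : ℂ) by push_cast; ring]
    rw [Complex.zero_le_real]
    positivity
  refine ⟨⟨fun k => ?_, ?_⟩, fun k => ?_⟩
  · exact smul_posSemidef h1dCinv
      ((smul_posSemidef hdC0 (pinch_posSemidef (hM.1 k))).add (hδpsd k))
  · rw [← Finset.smul_sum, Finset.sum_add_distrib, ← Finset.smul_sum, sum_pinch, hM.2,
      pinch_one, hδsum]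
    rw [show ((d:ℂ) • (1 : Matrix (Fin dA × Fin dB) (Fin dA × Fin dB) ℂ) + 1)
        = ((d:ℂ) + 1) • 1 by rw [add_smul, one_smul]]
    rw [smul_smul, add_comm (d:ℂ) 1, inv_mul_cancel₀ h1dC, one_smul]
  · refine isSepMat_smul h1dCinv (isSepMat_add (isSepMat_smul hdC0 (hsep _ (hM.1 k))) ?_)
    by_cases h : k = i0 <;> simp [hδ, h, isSepMat_one, isSepMat_zero]

end SepRobustAux

/-- Every `n`-outcome POVM on `ℂ^{d_A} ⊗ ℂ^{d_B}` has robustness at most `min{d_A, d_B}`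
with respect to separable POVMs. -/
theorem robustness_sep_le {dA dB n : ℕ} (hA : 1 ≤ dA) (hB : 1 ≤ dB) (hn : 1 ≤ n)
    (M : Fin n → Matrix (Fin dA × Fin dB) (Fin dA × Fin dB) ℂ) (hM : IsPOVM M) :
    robustness (SepPOVM dA dB n) M ≤ min (dA : ℝ) (dB : ℝ) := by
  have hbdd : BddBelow (robustnessSet (SepPOVM dA dB n) M) := ⟨0, fun x hx => hx.1⟩
  rcases le_total (dA:ℝ) (dB:ℝ) with h | h
  · rw [min_eq_left h]
    have hmem := SepRobustAux.card_mem_robustnessSet (Prod.fst : Fin dA × Fin dB → Fin dA)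
      (by simpa using hA) (fun X hX => SepRobustAux.isSepMat_pinch_fst hX) hn M hM
    have := csInf_le hbdd hmem; simp only [Fintype.card_fin] at this; exact this
  · rw [min_eq_right h]
    have hmem := SepRobustAux.card_mem_robustnessSet (Prod.snd : Fin dA × Fin dB → Fin dB)
      (by simpa using hB) (fun X hX => SepRobustAux.isSepMat_pinch_snd hX) hn M hM
    have := csInf_le hbdd hmem; simp only [Fintype.card_fin] at this; exact this
end

section
/- Let D ≥ 1 and for n, m ∈ {0, …, D−1} let |Ψ_{nm}⟩ = (1/√D) Σ_{j=0}^{D−1} e^{2πi jn/D} |j⟩ ⊗ |(j+m) mod D⟩ be the maximally entangled basis of ℂ^D ⊗ ℂ^D, with Ψ_{nm} = |Ψ_{nm}⟩⟨Ψ_{nm}|. Then for every separable D²-outcome POVM N = (N_{nm})_{n,m=0}^{D−1} on ℂ^D ⊗ ℂ^D ≅ ℂ^{D²}, the success probability of discriminating the uniform ensemble of these states satisfies (1/D²) Σ_{n,m=0}^{D−1} tr(Ψ_{nm} N_{nm}) ≤ 1/D. -/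
open scoped BigOperators ComplexOrder Kronecker

/-- The maximally entangled vector
`|Ψ_{nm}⟩ = (1/√D) Σ_j e^{2πi jn/D} |j⟩ ⊗ |(j+m) mod D⟩` of `ℂ^D ⊗ ℂ^D`. -/
noncomputable def entVec (D : ℕ) [NeZero D] (nm : Fin D × Fin D) : Fin D × Fin D → ℂ :=
  fun jk =>
    if jk.2 = jk.1 + nm.2 then
      ((Real.sqrt D : ℝ) : ℂ)⁻¹ *
        Complex.exp (2 * Real.pi * Complex.I * (jk.1.val : ℂ) * (nm.1.val : ℂ) / (D : ℂ))
    else 0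

/-- The rank-one projector `Ψ_{nm} = |Ψ_{nm}⟩⟨Ψ_{nm}|`. -/
noncomputable def entProj (D : ℕ) [NeZero D] (nm : Fin D × Fin D) :
    Matrix (Fin D × Fin D) (Fin D × Fin D) ℂ :=
  Matrix.of fun x y => entVec D nm x * (starRingEnd ℂ) (entVec D nm y)

open Matrix

noncomputable def entCoef (D : ℕ) [NeZero D] (n : Fin D) (j : Fin D) : ℂ :=
  ((Real.sqrt D : ℝ) : ℂ)⁻¹ *
    Complex.exp (2 * Real.pi * Complex.I * (j.val : ℂ) * (n.val : ℂ) / (D : ℂ))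

lemma entVec_eq (D : ℕ) [NeZero D] (nm : Fin D × Fin D) (jk : Fin D × Fin D) :
    entVec D nm jk = if jk.2 = jk.1 + nm.2 then entCoef D nm.1 jk.1 else 0 := rfl

lemma norm_entCoef (D : ℕ) [NeZero D] (n j : Fin D) :
    ‖entCoef D n j‖ = (Real.sqrt D)⁻¹ := by
  have : (2 * Real.pi * Complex.I * (j.val : ℂ) * (n.val : ℂ) / (D : ℂ))
      = ((2 * Real.pi * j.val * n.val / D : ℝ) : ℂ) * Complex.I := by
    push_cast; ring
  rw [entCoef, this, norm_mul,
    Complex.norm_exp_ofReal_mul_I, mul_one, norm_inv, Complex.norm_real,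
    Real.norm_of_nonneg (Real.sqrt_nonneg _)]

lemma sum4_comm {α β γ δ M : Type*} [Fintype α] [Fintype β] [Fintype γ] [Fintype δ]
    [AddCommMonoid M] (f : α → β → γ → δ → M) :
    ∑ a, ∑ b, ∑ c, ∑ d, f a b c d = ∑ c, ∑ d, ∑ b, ∑ a, f a b c d :=
  calc ∑ a, ∑ b, ∑ c, ∑ d, f a b c d
      = ∑ b, ∑ a, ∑ c, ∑ d, f a b c d := Finset.sum_comm
    _ = ∑ b, ∑ c, ∑ a, ∑ d, f a b c d :=
        Finset.sum_congr rfl fun b _ => Finset.sum_comm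
    _ = ∑ c, ∑ b, ∑ a, ∑ d, f a b c d := Finset.sum_comm
    _ = ∑ c, ∑ b, ∑ d, ∑ a, f a b c d :=
        Finset.sum_congr rfl fun c _ => Finset.sum_congr rfl fun b _ => Finset.sum_comm
    _ = ∑ c, ∑ d, ∑ b, ∑ a, f a b c d :=
        Finset.sum_congr rfl fun c _ => Finset.sum_comm

lemma sum4_comm' {α β γ δ M : Type*} [Fintype α] [Fintype β] [Fintype γ] [Fintype δ]
    [AddCommMonoid M] (f : α → β → γ → δ → M) :
    ∑ a, ∑ b, ∑ c, ∑ d, f a b c d = ∑ d, ∑ c, ∑ a, ∑ b, f a b c d :=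
  calc ∑ a, ∑ b, ∑ c, ∑ d, f a b c d
      = ∑ a, ∑ b, ∑ d, ∑ c, f a b c d :=
        Finset.sum_congr rfl fun a _ => Finset.sum_congr rfl fun b _ => Finset.sum_comm
    _ = ∑ a, ∑ d, ∑ b, ∑ c, f a b c d :=
        Finset.sum_congr rfl fun a _ => Finset.sum_comm
    _ = ∑ d, ∑ a, ∑ b, ∑ c, f a b c d := Finset.sum_comm
    _ = ∑ d, ∑ a, ∑ c, ∑ b, f a b c d :=
        Finset.sum_congr rfl fun d _ => Finset.sum_congr rfl fun a _ => Finset.sum_comm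
    _ = ∑ d, ∑ c, ∑ a, ∑ b, f a b c d :=
        Finset.sum_congr rfl fun d _ => Finset.sum_comm

lemma conj_mul_self_re (z : ℂ) : ((starRingEnd ℂ) z * z).re = ‖z‖ ^ 2 := by
  rw [mul_comm, Complex.mul_conj, Complex.ofReal_re, Complex.normSq_eq_norm_sq]

lemma trace_re_eq (D : ℕ) (S : Matrix (Fin D) (Fin D) ℂ) :
    ((Sᴴ * S).trace).re = ∑ j, ∑ l, ‖S l j‖ ^ 2 := by
  rw [Matrix.trace]
  simp only [Matrix.diag, Matrix.mul_apply, Matrix.conjTranspose_apply, Complex.re_sum]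
  exact Finset.sum_congr rfl fun j _ => Finset.sum_congr rfl fun l _ => conj_mul_self_re _

lemma trace_entProj_mul (D : ℕ) [NeZero D] (p : Fin D × Fin D)
    (M : Matrix (Fin D × Fin D) (Fin D × Fin D) ℂ) :
    (entProj D p * M).trace = ∑ j, ∑ j',
      entCoef D p.1 j * (starRingEnd ℂ) (entCoef D p.1 j') * M (j', j' + p.2) (j, j + p.2) := by
  rw [Matrix.trace]
  simp only [Matrix.diag, Matrix.mul_apply, entProj, Matrix.of_apply, entVec_eq,
    Fintype.sum_prod_type]
  simp only [apply_ite (starRingEnd ℂ), map_zero, ite_mul, mul_ite, zero_mul, mul_zero,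
    Finset.sum_ite_eq', Finset.mem_univ, if_true]
  refine Finset.sum_congr rfl fun j _ => ?_
  rw [Finset.sum_comm]
  simp only [Finset.sum_ite_eq', Finset.mem_univ, if_true]

lemma key (D : ℕ) [NeZero D] (p : Fin D × Fin D) (A B : Matrix (Fin D) (Fin D) ℂ)
    (hA : A.PosSemidef) (hB : B.PosSemidef) :
    ((entProj D p * (A ⊗ₖ B)).trace).re ≤ (1 / (D : ℝ)) * (A.trace.re * B.trace.re) := by
  obtain ⟨S, hS⟩ := (by open scoped MatrixOrder Matrix.Norms.L2Operator in
    exact CStarAlgebra.nonneg_iff_eq_star_mul_self.mp hA.nonneg)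
  rw [Matrix.star_eq_conjTranspose] at hS; subst hS
  obtain ⟨T, hT⟩ := (by open scoped MatrixOrder Matrix.Norms.L2Operator in
    exact CStarAlgebra.nonneg_iff_eq_star_mul_self.mp hB.nonneg)
  rw [Matrix.star_eq_conjTranspose] at hT; subst hT
  set c : Fin D → ℂ := fun j => entCoef D p.1 j with hc
  set w : Fin D → Fin D → ℂ := fun l r => ∑ j, c j * S l j * T r (j + p.2) with hw
  have htr : (entProj D p * ((Sᴴ * S) ⊗ₖ (Tᴴ * T))).trace
      = ∑ l, ∑ r, (starRingEnd ℂ) (w l r) * w l r := by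
    rw [trace_entProj_mul]
    simp only [hw, Matrix.kroneckerMap_apply, Matrix.mul_apply, Matrix.conjTranspose_apply,
      map_sum, _root_.map_mul, Finset.mul_sum, Finset.sum_mul, Complex.star_def]
    rw [sum4_comm']
    exact Finset.sum_congr rfl fun l _ => Finset.sum_congr rfl fun r _ =>
      Finset.sum_congr rfl fun a _ => Finset.sum_congr rfl fun b _ => by ring
  rw [htr, Complex.re_sum]
  have hre : ∀ l, (∑ r, (starRingEnd ℂ) (w l r) * w l r).re = ∑ r, ‖w l r‖ ^ 2 := by
    intro l; rw [Complex.re_sum]; exact Finset.sum_congr rfl fun r _ => conj_mul_self_re _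
  simp only [hre]
  have hwb : ∀ l r, ‖w l r‖ ^ 2
      ≤ (1 / (D : ℝ)) * ((∑ j, ‖S l j‖ ^ 2) * (∑ j, ‖T r j‖ ^ 2)) := by
    intro l r
    have h1 : ‖w l r‖ ≤ (Real.sqrt D)⁻¹ * ∑ j, ‖S l j‖ * ‖T r (j + p.2)‖ := by
      refine (norm_sum_le _ _).trans ?_
      rw [Finset.mul_sum]
      refine Finset.sum_le_sum fun j _ => ?_
      rw [norm_mul, norm_mul, hc, norm_entCoef, mul_assoc]
    have h2 : ‖w l r‖ ^ 2 ≤ ((Real.sqrt D)⁻¹) ^ 2 * (∑ j, ‖S l j‖ * ‖T r (j + p.2)‖) ^ 2 := by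
      rw [← mul_pow]
      exact pow_le_pow_left₀ (norm_nonneg _) h1 2
    have h3 : (∑ j, ‖S l j‖ * ‖T r (j + p.2)‖) ^ 2
        ≤ (∑ j, ‖S l j‖ ^ 2) * ∑ j, ‖T r (j + p.2)‖ ^ 2 :=
      Finset.sum_mul_sq_le_sq_mul_sq _ _ _
    have h4 : (∑ j, ‖T r (j + p.2)‖ ^ 2) = ∑ j, ‖T r j‖ ^ 2 :=
      Fintype.sum_equiv (Equiv.addRight p.2) _ _ (fun j => rfl)
    have h5 : ((Real.sqrt D)⁻¹) ^ 2 = 1 / (D : ℝ) := by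
      rw [inv_pow, Real.sq_sqrt (by positivity)]
      exact (one_div _).symm
    rw [h4] at h3
    calc ‖w l r‖ ^ 2 ≤ ((Real.sqrt D)⁻¹) ^ 2 * (∑ j, ‖S l j‖ * ‖T r (j + p.2)‖) ^ 2 := h2
      _ ≤ ((Real.sqrt D)⁻¹) ^ 2 * ((∑ j, ‖S l j‖ ^ 2) * ∑ j, ‖T r j‖ ^ 2) :=
          mul_le_mul_of_nonneg_left h3 (by positivity)
      _ = (1 / (D : ℝ)) * ((∑ j, ‖S l j‖ ^ 2) * ∑ j, ‖T r j‖ ^ 2) := by rw [h5]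
  calc ∑ l, ∑ r, ‖w l r‖ ^ 2
      ≤ ∑ l, ∑ r, (1 / (D : ℝ)) * ((∑ j, ‖S l j‖ ^ 2) * (∑ j, ‖T r j‖ ^ 2)) :=
        Finset.sum_le_sum fun l _ => Finset.sum_le_sum fun r _ => hwb l r
    _ = (1 / (D : ℝ)) * ∑ l, ∑ r, ((∑ j, ‖S l j‖ ^ 2) * (∑ j, ‖T r j‖ ^ 2)) := by
        rw [Finset.mul_sum]
        exact Finset.sum_congr rfl fun l _ => (Finset.mul_sum _ _ _).symm
    _ = (1 / (D : ℝ)) * ((∑ l, ∑ j, ‖S l j‖ ^ 2) * (∑ r, ∑ j, ‖T r j‖ ^ 2)) := by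
        rw [Finset.sum_mul_sum]
    _ = (1 / (D : ℝ)) * (((Sᴴ * S).trace).re * ((Tᴴ * T).trace).re) := by
        rw [trace_re_eq, trace_re_eq, Finset.sum_comm (f := fun l j => ‖S l j‖ ^ 2),
          Finset.sum_comm (f := fun r j => ‖T r j‖ ^ 2)]

lemma psd_trace_im {n : Type*} [Fintype n] {A : Matrix n n ℂ} (hA : A.PosSemidef) :
    A.trace.im = 0 := by
  have h := Matrix.trace_conjTranspose A
  rw [hA.1] at h
  have : (starRingEnd ℂ) A.trace = A.trace := h.symm
  exact (Complex.conj_eq_iff_im.mp this)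

/-- No separable POVM can discriminate the uniform ensemble of the `D²` maximally
entangled basis states with success probability greater than `1/D`. -/
theorem sep_povm_entangled_basis_bound (D : ℕ) [NeZero D]
    (N : Fin D × Fin D → Matrix (Fin D × Fin D) (Fin D × Fin D) ℂ)
    (hN : IsPOVM N) (hsep : ∀ p, IsSepMat (N p)) :
    (1 / (D : ℝ) ^ 2) * ∑ p, ((entProj D p * N p).trace).re ≤ 1 / (D : ℝ) := by
  obtain ⟨hpos, hsum⟩ := hN
  have hDpos : (0 : ℝ) < D := by
    exact_mod_cast Nat.pos_of_ne_zero (NeZero.ne D)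
  have key2 : ∀ p, ((entProj D p * N p).trace).re ≤ (1 / (D : ℝ)) * ((N p).trace).re := by
    intro p
    obtain ⟨k, A, B, hA, hB, hNp⟩ := hsep p
    have treal : ∀ i, ((A i ⊗ₖ B i).trace).re = (A i).trace.re * (B i).trace.re := by
      intro i
      rw [Matrix.trace_kronecker, Complex.mul_re, psd_trace_im (hA i), psd_trace_im (hB i)]
      ring
    rw [hNp, Matrix.mul_sum, Matrix.trace_sum, Complex.re_sum,
      Matrix.trace_sum, Complex.re_sum]
    refine le_trans (Finset.sum_le_sum fun i _ => key D p _ _ (hA i) (hB i)) ?_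
    rw [Finset.mul_sum]
    exact le_of_eq (Finset.sum_congr rfl fun i _ => by rw [treal i])
  have hsumtr : ∑ p : Fin D × Fin D, ((N p).trace).re = (D : ℝ) ^ 2 := by
    rw [← Complex.re_sum, ← Matrix.trace_sum, hsum, Matrix.trace_one]
    simp [Fintype.card_prod]
    push_cast
    ring
  have hmain : ∑ p : Fin D × Fin D, ((entProj D p * N p).trace).re ≤ (D : ℝ) := by
    calc ∑ p : Fin D × Fin D, ((entProj D p * N p).trace).re
        ≤ ∑ p : Fin D × Fin D, (1 / (D : ℝ)) * ((N p).trace).re :=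
          Finset.sum_le_sum fun p _ => key2 p
      _ = (1 / (D : ℝ)) * (D : ℝ) ^ 2 := by rw [← Finset.mul_sum, hsumtr]
      _ = (D : ℝ) := by field_simp
  calc (1 / (D : ℝ) ^ 2) * ∑ p, ((entProj D p * N p).trace).re
      ≤ (1 / (D : ℝ) ^ 2) * (D : ℝ) :=
        mul_le_mul_of_nonneg_left hmain (by positivity)
    _ = 1 / (D : ℝ) := by field_simp
end

section
/- Let N ≥ 1, d = 2^N, and let Ψ_1, …, Ψ_m be rank-one projectors onto unit vectors of (ℂ²)^{⊗N} ≅ ℂ^{2^N}. Suppose ε > 0 is such that tr(φ Ψ_i) ≤ ε for every i and every rank-one projector φ onto a product unit vector φ_1 ⊗ ⋯ ⊗ φ_N. Then every m-outcome POVM (N_1, …, N_m) on ℂ^{2^N} all of whose effects are N-qubit separable satisfies (1/m) Σ_{i=1}^m tr(Ψ_i N_i) ≤ ε · 2^N / m. -/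
open scoped BigOperators ComplexOrder

/-- An elementary product operator on `N` qubits: an `N`-fold Kronecker product
`A_1 ⊗ ⋯ ⊗ A_N` of positive semidefinite `2×2` matrices. -/
def IsProdPSD {N : ℕ} (X : Matrix (Fin N → Fin 2) (Fin N → Fin 2) ℂ) : Prop :=
  ∃ A : Fin N → Matrix (Fin 2) (Fin 2) ℂ,
    (∀ t, (A t).PosSemidef) ∧ ∀ x y, X x y = ∏ t, A t (x t) (y t)

/-- An `N`-qubit separable operator: a finite sum of elementary product operators. -/
def IsNSep {N : ℕ} (X : Matrix (Fin N → Fin 2) (Fin N → Fin 2) ℂ) : Prop :=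
  ∃ (k : ℕ) (Y : Fin k → Matrix (Fin N → Fin 2) (Fin N → Fin 2) ℂ),
    (∀ i, IsProdPSD (Y i)) ∧ X = ∑ i, Y i

lemma psd2_decomp (A : Matrix (Fin 2) (Fin 2) ℂ) (hA : A.PosSemidef) :
    ∃ (lam : Fin 2 → ℝ) (u : Fin 2 → Fin 2 → ℂ),
      (∀ j, 0 ≤ lam j) ∧ (∀ j, ∑ s, Complex.normSq (u j s) = 1) ∧
      ∀ x y, A x y = ∑ j, (lam j : ℂ) * (u j x * (starRingEnd ℂ) (u j y)) := by
  have hH := hA.isHermitian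
  set U : Matrix (Fin 2) (Fin 2) ℂ := (hH.eigenvectorUnitary : Matrix (Fin 2) (Fin 2) ℂ)
  refine ⟨hH.eigenvalues, fun j x => U x j, hA.eigenvalues_nonneg, ?_, ?_⟩
  · intro j
    have hU : star U * U = 1 := Unitary.coe_star_mul_self hH.eigenvectorUnitary
    have h1 : (star U * U) j j = 1 := by rw [hU]; simp
    have h2 : ∑ s, (starRingEnd ℂ) (U s j) * U s j = 1 := by
      simpa [Matrix.mul_apply, Matrix.star_apply] using h1
    have h3 : ((∑ s, Complex.normSq (U s j) : ℝ) : ℂ) = 1 := by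
      push_cast
      rw [← h2]
      exact Finset.sum_congr rfl fun s _ => by
        rw [mul_comm, Complex.mul_conj]
    exact_mod_cast h3
  · intro x y
    conv_lhs => rw [hH.spectral_theorem]
    simp only [Unitary.conjStarAlgAut_apply, Matrix.mul_apply, Matrix.diagonal_apply, Matrix.star_apply,
      Function.comp_apply]
    simp only [mul_ite, mul_zero, Finset.sum_ite_eq', Finset.mem_univ, if_true]
    refine Finset.sum_congr rfl fun j _ => ?_
    rw [starRingEnd_apply]
    show U x j * (hH.eigenvalues j : ℂ) * star (U y j) = (hH.eigenvalues j : ℂ) * (U x j * star (U y j))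
    ring

lemma prodPSD_trace_bound {N : ℕ} (Ψ : Matrix (Fin N → Fin 2) (Fin N → Fin 2) ℂ) (ε : ℝ)
    (hover : ∀ u : Fin N → Fin 2 → ℂ, (∀ t, (∑ s, Complex.normSq (u t s)) = 1) →
      ((Matrix.of (fun x y : Fin N → Fin 2 =>
          (∏ t, u t (x t)) * (starRingEnd ℂ) (∏ t, u t (y t))) * Ψ).trace).re ≤ ε)
    (X : Matrix (Fin N → Fin 2) (Fin N → Fin 2) ℂ) (hX : IsProdPSD X) :
    ((X * Ψ).trace).re ≤ ε * X.trace.re := by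
  obtain ⟨A, hApsd, hXA⟩ := hX
  choose lam u hlam hunit hdec using fun t => psd2_decomp (A t) (hApsd t)
  set c : (Fin N → Fin 2) → ℝ := fun f => ∏ t, lam t (f t) with hc
  have hcnn : ∀ f, 0 ≤ c f := fun f => Finset.prod_nonneg fun t _ => hlam t (f t)
  set P : (Fin N → Fin 2) → Matrix (Fin N → Fin 2) (Fin N → Fin 2) ℂ :=
    fun f => Matrix.of (fun x y : Fin N → Fin 2 =>
      (∏ t, u t (f t) (x t)) * (starRingEnd ℂ) (∏ t, u t (f t) (y t))) with hP
  have key : X = ∑ f : Fin N → Fin 2, ((c f : ℂ)) • P f := by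
    ext x y
    rw [hXA]
    have h1 : ∀ t, A t (x t) (y t)
        = ∑ j, (lam t j : ℂ) * (u t j (x t) * (starRingEnd ℂ) (u t j (y t))) :=
      fun t => hdec t (x t) (y t)
    calc ∏ t, A t (x t) (y t)
        = ∏ t, ∑ j, (lam t j : ℂ) * (u t j (x t) * (starRingEnd ℂ) (u t j (y t))) := by
          exact Finset.prod_congr rfl fun t _ => h1 t
      _ = ∑ f ∈ Fintype.piFinset (fun _ : Fin N => (Finset.univ : Finset (Fin 2))),
            ∏ t, (lam t (f t) : ℂ) * (u t (f t) (x t) * (starRingEnd ℂ) (u t (f t) (y t))) :=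
          Finset.prod_univ_sum _ _
      _ = ∑ f : Fin N → Fin 2, ((c f : ℂ)) • P f x y := by
          rw [Fintype.piFinset_univ]
          refine Finset.sum_congr rfl fun f _ => ?_
          simp only [hP, smul_eq_mul, Matrix.of_apply, hc]
          rw [Finset.prod_mul_distrib, Finset.prod_mul_distrib, map_prod]
          push_cast
          ring
      _ = (∑ f : Fin N → Fin 2, ((c f : ℂ)) • P f) x y := by
          simp [Matrix.sum_apply]
  have htrP : ∀ f, (P f).trace = 1 := by
    intro f
    have : (P f).trace = ∑ x : Fin N → Fin 2,
        ∏ t, (u t (f t) (x t) * (starRingEnd ℂ) (u t (f t) (x t))) := by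
      simp only [Matrix.trace, Matrix.diag, hP, Matrix.of_apply]
      refine Finset.sum_congr rfl fun x _ => ?_
      rw [Finset.prod_mul_distrib, map_prod]
    rw [this, ← Fintype.piFinset_univ, ← Finset.prod_univ_sum
      (fun _ : Fin N => (Finset.univ : Finset (Fin 2)))
      (fun t s => u t (f t) s * (starRingEnd ℂ) (u t (f t) s))]
    have : ∀ t : Fin N, ∑ s, (u t (f t) s * (starRingEnd ℂ) (u t (f t) s)) = 1 := by
      intro t
      have := hunit t (f t)
      calc ∑ s, (u t (f t) s * (starRingEnd ℂ) (u t (f t) s))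
          = ∑ s, ((Complex.normSq (u t (f t) s) : ℝ) : ℂ) := by
            refine Finset.sum_congr rfl fun s _ => by rw [Complex.mul_conj]
        _ = 1 := by exact_mod_cast congrArg (Complex.ofReal) this
    simp [this]
  have htrX : X.trace.re = ∑ f : Fin N → Fin 2, c f := by
    rw [key, Matrix.trace_sum]
    simp only [Matrix.trace_smul, htrP, smul_eq_mul, mul_one]
    rw [Complex.re_sum]
    simp
  have hXΨ : ((X * Ψ).trace).re = ∑ f : Fin N → Fin 2, c f * ((P f * Ψ).trace).re := by
    rw [key, Finset.sum_mul, Matrix.trace_sum, Complex.re_sum]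
    refine Finset.sum_congr rfl fun f _ => ?_
    rw [Matrix.smul_mul, Matrix.trace_smul]
    simp [smul_eq_mul, Complex.mul_re]
  rw [hXΨ, htrX, Finset.mul_sum]
  refine Finset.sum_le_sum fun f _ => ?_
  rw [mul_comm ε (c f)]
  exact mul_le_mul_of_nonneg_left (hover (fun t => u t (f t)) (fun t => hunit t (f t))) (hcnn f)

/-- If each of the pure states `Ψ_1, …, Ψ_m` on `N` qubits has overlap at most `ε` with
every product pure state, then no separable POVM can discriminate the uniform ensemble
of these states with success probability greater than `ε · 2^N / m`. -/
theorem sep_povm_haar_bound (N m : ℕ) (hN : 1 ≤ N) (hm : 1 ≤ m)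
    (Ψ : Fin m → Matrix (Fin N → Fin 2) (Fin N → Fin 2) ℂ)
    (hΨ : ∀ i, ∃ v : (Fin N → Fin 2) → ℂ,
      (∑ x, Complex.normSq (v x)) = 1 ∧
      Ψ i = Matrix.of fun x y => v x * (starRingEnd ℂ) (v y))
    (ε : ℝ) (hε : 0 < ε)
    (hover : ∀ i, ∀ u : Fin N → Fin 2 → ℂ, (∀ t, (∑ s, Complex.normSq (u t s)) = 1) →
      ((Matrix.of (fun x y : Fin N → Fin 2 =>
          (∏ t, u t (x t)) * (starRingEnd ℂ) (∏ t, u t (y t))) * Ψ i).trace).re ≤ ε)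
    (Nv : Fin m → Matrix (Fin N → Fin 2) (Fin N → Fin 2) ℂ)
    (hPOVM : IsPOVM Nv) (hsep : ∀ i, IsNSep (Nv i)) :
    (1 / (m : ℝ)) * ∑ i, ((Ψ i * Nv i).trace).re ≤ ε * 2 ^ N / m := by
  obtain ⟨hpsd, hsum⟩ := hPOVM
  have hbound : ∀ i, ((Ψ i * Nv i).trace).re ≤ ε * (Nv i).trace.re := by
    intro i
    rw [Matrix.trace_mul_comm]
    obtain ⟨k, Y, hY, hXY⟩ := hsep i
    rw [hXY, Finset.sum_mul, Matrix.trace_sum, Complex.re_sum, Matrix.trace_sum,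
      Complex.re_sum, Finset.mul_sum]
    exact Finset.sum_le_sum fun j _ => prodPSD_trace_bound _ ε (hover i) _ (hY j)
  have hS : ∑ i, ((Ψ i * Nv i).trace).re ≤ ε * 2 ^ N := by
    calc ∑ i, ((Ψ i * Nv i).trace).re ≤ ∑ i, ε * (Nv i).trace.re :=
          Finset.sum_le_sum fun i _ => hbound i
      _ = ε * (∑ i, Nv i).trace.re := by
          rw [Matrix.trace_sum, Complex.re_sum, Finset.mul_sum]
      _ = ε * 2 ^ N := by
          rw [hsum, Matrix.trace_one]
          simp only [Fintype.card_fun, Fintype.card_fin, Complex.natCast_re]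
          push_cast
          ring
  calc (1 / (m : ℝ)) * ∑ i, ((Ψ i * Nv i).trace).re
      ≤ (1 / (m : ℝ)) * (ε * 2 ^ N) := mul_le_mul_of_nonneg_left hS (by positivity)
    _ = ε * 2 ^ N / m := by ring
end
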